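/- As ξ → 0⁺, the rescaled inverse ν(ξ)·Σ(ξ)^{-1} converges entrywise to G = D^{-1} − D^{-1}11'D^{-1}/(1'D^{-1}1). -/

import Mathlib

open Matrix Filter Topology

/-- The all-ones vector. -/
def ones (n : ℕ) : Fin n → ℝ := fun _ => 1

/-- G = D⁻¹ − D⁻¹11'D⁻¹/(1'D⁻¹1). -/
noncomputable def Gmat {n : ℕ} (D : Matrix (Fin n) (Fin n) ℝ) : Matrix (Fin n) (Fin n) ℝ :=
  D⁻¹ - (ones n ⬝ᵥ D⁻¹.mulVec (ones n))⁻¹ • (D⁻¹ * vecMulVec (ones n) (ones n) * D⁻¹)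

lemma vmv_mul_mul_vmv {n : ℕ} (u v w x : Fin n → ℝ) (B : Matrix (Fin n) (Fin n) ℝ) :
    vecMulVec u v * B * vecMulVec w x = (v ⬝ᵥ B.mulVec w) • vecMulVec u x := by
  ext i j
  simp only [mul_apply, vecMulVec_apply, Matrix.smul_apply, smul_eq_mul, dotProduct, mulVec,
    Finset.sum_mul, Finset.mul_sum]
  rw [Finset.sum_comm]
  exact Finset.sum_congr rfl fun k _ => Finset.sum_congr rfl fun l _ => by ring

/-- as ξ → 0⁺, ν(ξ)·Σ(ξ)⁻¹ converges entrywise to G. -/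
theorem rescaled_inverse_tendsto_G
    (n : ℕ) (hn : 2 ≤ n)
    (D : Matrix (Fin n) (Fin n) ℝ) (hDsymm : D.IsSymm) (hDdet : IsUnit D.det)
    (hD1 : ones n ⬝ᵥ D⁻¹.mulVec (ones n) ≠ 0)
    (ν : ℝ → ℝ) (hνpos : ∀ ξ > 0, 0 < ν ξ)
    (hν0 : Tendsto ν (𝓝[>] 0) (𝓝 0))
    (Sg : ℝ → Matrix (Fin n) (Fin n) ℝ) (hpd : ∀ ξ > 0, (Sg ξ).PosDef)
    (E : ℝ → Matrix (Fin n) (Fin n) ℝ)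
    (hE : ∀ i j, Tendsto (fun ξ => E ξ i j) (𝓝[>] 0) (𝓝 0))
    (hdecomp : ∀ ξ > 0, Sg ξ = vecMulVec (ones n) (ones n) + ν ξ • (D + E ξ)) :
    ∀ i j, Tendsto (fun ξ => ν ξ * (Sg ξ)⁻¹ i j) (𝓝[>] 0) (𝓝 (Gmat D i j)) := by
  set V : Matrix (Fin n) (Fin n) ℝ := vecMulVec (ones n) (ones n) with hV
  set M : ℝ → Matrix (Fin n) (Fin n) ℝ := fun ξ => D + E ξ with hM
  -- M tends to D
  have hMt : Tendsto M (𝓝[>] 0) (𝓝 D) := by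
    refine tendsto_pi_nhds.mpr ?_; intro i
    refine tendsto_pi_nhds.mpr ?_; intro j
    have : Tendsto (fun ξ => D i j + E ξ i j) (𝓝[>] 0) (𝓝 (D i j + 0)) :=
      tendsto_const_nhds.add (hE i j)
    simpa [hM, Matrix.add_apply] using this
  -- inverse tends to D⁻¹
  have hcinv : ContinuousAt Inv.inv D := by
    apply continuousAt_matrix_inv
    rw [Ring.inverse_eq_inv']
    exact continuousAt_inv₀ (isUnit_iff_ne_zero.mp hDdet)
  have hMinv : Tendsto (fun ξ => (M ξ)⁻¹) (𝓝[>] 0) (𝓝 D⁻¹) := hcinv.tendsto.comp hMt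
  -- s tends to s₀
  set s : ℝ → ℝ := fun ξ => ones n ⬝ᵥ (M ξ)⁻¹.mulVec (ones n) with hs
  set s₀ : ℝ := ones n ⬝ᵥ D⁻¹.mulVec (ones n) with hs0
  have hcont : Continuous fun P : Matrix (Fin n) (Fin n) ℝ => ones n ⬝ᵥ P.mulVec (ones n) :=
    Continuous.dotProduct continuous_const (continuous_id.matrix_mulVec continuous_const)
  have hst : Tendsto s (𝓝[>] 0) (𝓝 s₀) := hcont.continuousAt.tendsto.comp hMinv
  -- g tends to s₀
  set g : ℝ → ℝ := fun ξ => ν ξ + s ξ with hg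
  have hgt : Tendsto g (𝓝[>] 0) (𝓝 s₀) := by
    have := hν0.add hst; simpa using this
  have hginv : Tendsto (fun ξ => (g ξ)⁻¹) (𝓝[>] 0) (𝓝 s₀⁻¹) := hgt.inv₀ hD1
  -- the candidate A
  set A : ℝ → Matrix (Fin n) (Fin n) ℝ :=
    fun ξ => (M ξ)⁻¹ - (g ξ)⁻¹ • ((M ξ)⁻¹ * V * (M ξ)⁻¹) with hA
  intro i j
  -- A tends to G entrywise
  have hAt : Tendsto (fun ξ => A ξ i j) (𝓝[>] 0) (𝓝 (Gmat D i j)) := by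
    have h1 : Tendsto (fun ξ => (M ξ)⁻¹ i j) (𝓝[>] 0) (𝓝 (D⁻¹ i j)) :=
      tendsto_pi_nhds.mp (tendsto_pi_nhds.mp hMinv i) j
    have hc2 : Continuous fun P : Matrix (Fin n) (Fin n) ℝ => (P * V * P) i j :=
      Continuous.matrix_elem ((continuous_id.matrix_mul continuous_const).matrix_mul
        continuous_id) i j
    have h2 : Tendsto (fun ξ => ((M ξ)⁻¹ * V * (M ξ)⁻¹) i j) (𝓝[>] 0)
        (𝓝 ((D⁻¹ * V * D⁻¹) i j)) := hc2.continuousAt.tendsto.comp hMinv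
    have := h1.sub (hginv.mul h2)
    simp only [hA, Gmat, Matrix.sub_apply, Matrix.smul_apply, smul_eq_mul]
    convert this using 2
  -- eventual equality
  have hev : ∀ᶠ ξ in 𝓝[>] 0, ν ξ * (Sg ξ)⁻¹ i j = A ξ i j := by
    have hdet : Tendsto (fun ξ => (M ξ).det) (𝓝[>] 0) (𝓝 D.det) :=
      (Continuous.matrix_det continuous_id).continuousAt.tendsto.comp hMt
    have hdetev : ∀ᶠ ξ in 𝓝[>] 0, (M ξ).det ≠ 0 :=
      hdet.eventually_ne (isUnit_iff_ne_zero.mp hDdet)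
    have hgev : ∀ᶠ ξ in 𝓝[>] 0, g ξ ≠ 0 := hgt.eventually_ne hD1
    have hpos : ∀ᶠ ξ in 𝓝[>] 0, (0:ℝ) < ξ := eventually_mem_nhdsWithin
    filter_upwards [hdetev, hgev, hpos] with ξ hMd hg0 hξ
    set P := (M ξ)⁻¹ with hP
    have hMu : IsUnit (M ξ).det := isUnit_iff_ne_zero.mpr hMd
    have hMP : M ξ * P = 1 := mul_nonsing_inv _ hMu
    have hVPV : V * P * V = s ξ • V := vmv_mul_mul_vmv _ _ _ _ _
    -- Sg ξ * A ξ = ν ξ • 1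
    have key : Sg ξ * A ξ = ν ξ • (1 : Matrix (Fin n) (Fin n) ℝ) := by
      rw [hdecomp ξ hξ]
      have e1 : V * (P - (g ξ)⁻¹ • (P * V * P)) = V * P - ((g ξ)⁻¹ * s ξ) • (V * P) := by
        rw [mul_sub, mul_smul_comm]
        congr 1
        rw [← mul_assoc, ← mul_assoc, hVPV, smul_mul_assoc, smul_smul]
      have e2 : (ν ξ • (D + E ξ)) * (P - (g ξ)⁻¹ • (P * V * P)) =
          ν ξ • (1 : Matrix (Fin n) (Fin n) ℝ) - (ν ξ * (g ξ)⁻¹) • (V * P) := by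
        rw [smul_mul_assoc, mul_sub, mul_smul_comm]
        have : M ξ * (P * V * P) = V * P := by
          rw [mul_assoc P V P, ← mul_assoc, hMP, one_mul]
        rw [show (D + E ξ) = M ξ from rfl, hMP, this, smul_sub, smul_smul]
      rw [add_mul, e1, e2]
      have hco : (1 : ℝ) - (g ξ)⁻¹ * s ξ - ν ξ * (g ξ)⁻¹ = 0 := by
        have : s ξ = g ξ - ν ξ := by simp [hg]
        rw [this]; field_simp; ring
      have : V * P - ((g ξ)⁻¹ * s ξ) • (V * P) +
          (ν ξ • (1 : Matrix (Fin n) (Fin n) ℝ) - (ν ξ * (g ξ)⁻¹) • (V * P)) =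
          ν ξ • (1 : Matrix (Fin n) (Fin n) ℝ) +
          ((1 : ℝ) - (g ξ)⁻¹ * s ξ - ν ξ * (g ξ)⁻¹) • (V * P) := by
        module
      rw [this, hco, zero_smul, add_zero]
    -- conclude
    have hSu : IsUnit (Sg ξ).det := isUnit_iff_ne_zero.mpr (hpd ξ hξ).det_pos.ne'
    have : A ξ = ν ξ • (Sg ξ)⁻¹ := by
      have := congrArg (fun B => (Sg ξ)⁻¹ * B) key
      simpa [← mul_assoc, nonsing_inv_mul _ hSu, mul_smul_comm, mul_one,
        nonsing_inv_mul_cancel_left _ _ hSu] using this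
    rw [this, Matrix.smul_apply, smul_eq_mul]
  exact hAt.congr' (hev.mono fun ξ h => h.symm)
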